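/- Let q ∈ [10⁻¹⁵, 0.1] and define L̄(z) = q·z / (1 - (1-q)^{2^z - 1}). Then the derivative of L̄ at the point z = -log₂(-ln(1-q)) + 3 is strictly positive. -/

import Mathlib

open Real

set_option maxHeartbeats 1000000 in

/-- For `q ∈ [10⁻¹⁵, 0.1]`, the derivative of
`L̄(z) = qz/(1-(1-q)^{2^z-1})` at `z = -log₂(-ln(1-q)) + 3` is strictly
positive. -/
theorem stmt_11 (q : ℝ) (hq : q ∈ Set.Icc (1e-15 : ℝ) 0.1) :
    0 < deriv (fun z : ℝ => q * z / (1 - (1 - q) ^ ((2:ℝ) ^ z - 1)))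
      (-Real.logb 2 (-Real.log (1 - q)) + 3) := by
  obtain ⟨hq1, hq2⟩ := hq
  have hq0 : (0:ℝ) < q := lt_of_lt_of_le (by norm_num) hq1
  set p : ℝ := 1 - q with hp_def
  have hp0 : (0:ℝ) < p := by simp only [hp_def]; linarith
  have hp1 : p < 1 := by simp only [hp_def]; linarith
  have hp9 : (0.9:ℝ) ≤ p := by simp only [hp_def]; linarith
  set u : ℝ := -Real.log p with hu_def
  have hlogp_neg : Real.log p < 0 := Real.log_neg hp0 hp1
  have hu0 : 0 < u := by simp only [hu_def]; linarith
  -- u ≥ q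
  have huq : q ≤ u := by
    have := Real.log_le_sub_one_of_pos hp0
    simp only [hu_def, hp_def] at *; linarith
  -- u ≤ 1/9
  have hu19 : u ≤ 1/9 := by
    have h1 : Real.log p⁻¹ ≤ p⁻¹ - 1 := Real.log_le_sub_one_of_pos (by positivity)
    rw [Real.log_inv] at h1
    have hpi : p⁻¹ ≤ 1/0.9 := by
      rw [inv_le_comm₀ hp0 (by norm_num)]; linarith
    simp only [hu_def]; nlinarith
  set z₀ : ℝ := -Real.logb 2 u + 3 with hz_def
  -- 2^z₀ = 8/u
  have h2z : (2:ℝ) ^ z₀ = 8 / u := by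
    rw [hz_def, Real.rpow_add (by norm_num : (0:ℝ) < 2), Real.rpow_neg (by norm_num),
      Real.rpow_logb (by norm_num) (by norm_num) hu0]
    rw [show ((3:ℝ) = ((3:ℕ):ℝ)) by norm_num, Real.rpow_natCast]
    norm_num
    field_simp
  set w₀ : ℝ := (2:ℝ) ^ z₀ - 1 with hw_def
  set E : ℝ := Real.exp (u - 8) with hE_def
  have hpw : p ^ w₀ = E := by
    rw [hE_def, hw_def, Real.rpow_def_of_pos hp0, h2z]
    congr 1
    have : Real.log p = -u := by simp [hu_def]
    rw [this]; field_simp; ring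
  -- derivative computation
  have hd2 : HasDerivAt (fun z : ℝ => (2:ℝ) ^ z - 1) ((2:ℝ) ^ z₀ * Real.log 2) z₀ :=
    (Real.hasStrictDerivAt_const_rpow (by norm_num : (0:ℝ) < 2) z₀).hasDerivAt.sub_const 1
  have hdh : HasDerivAt (fun z : ℝ => p ^ ((2:ℝ) ^ z - 1))
      (p ^ w₀ * Real.log p * ((2:ℝ) ^ z₀ * Real.log 2)) z₀ := by
    exact (Real.hasStrictDerivAt_const_rpow hp0 w₀).hasDerivAt.comp z₀ hd2
  have hdden : HasDerivAt (fun z : ℝ => 1 - p ^ ((2:ℝ) ^ z - 1))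
      (-(p ^ w₀ * Real.log p * ((2:ℝ) ^ z₀ * Real.log 2))) z₀ := by
    have h := (hasDerivAt_const z₀ (1:ℝ)).sub hdh
    rw [zero_sub] at h
    exact h
  have hdnum : HasDerivAt (fun z : ℝ => q * z) q z₀ := by
    simpa using (hasDerivAt_id z₀).const_mul q
  -- denominator nonzero: 1 - E > 0
  have hE_small : E ≤ Real.exp (-7) := by
    rw [hE_def]; apply Real.exp_le_exp.2; linarith
  have hexp7 : (1000:ℝ) < Real.exp 7 := by
    have h := Real.exp_one_gt_d9
    have : (2.7:ℝ)^(7:ℕ) ≤ (Real.exp 1)^(7:ℕ) := by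
      apply pow_le_pow_left₀ (by norm_num); linarith
    calc (1000:ℝ) < (2.7:ℝ)^(7:ℕ) := by norm_num
    _ ≤ (Real.exp 1)^(7:ℕ) := this
    _ = Real.exp 7 := by rw [← Real.exp_nat_mul]; norm_num
  have hE_lt : E < 1/1000 := by
    have : Real.exp (-7) < 1/1000 := by
      rw [Real.exp_neg]
      rw [inv_lt_comm₀ (Real.exp_pos 7) (by norm_num)]
      linarith
    linarith
  have hE_pos : 0 < E := Real.exp_pos _
  have hden_pos : 0 < 1 - E := by linarith
  have hden_ne : (1:ℝ) - p ^ w₀ ≠ 0 := by rw [hpw]; linarith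
  have hddiv : HasDerivAt (fun z : ℝ => q * z / (1 - p ^ ((2:ℝ) ^ z - 1)))
      ((q * (1 - p ^ w₀) - q * z₀ * -(p ^ w₀ * Real.log p * ((2:ℝ) ^ z₀ * Real.log 2))) /
        (1 - p ^ w₀)^2) z₀ := hdnum.div hdden hden_ne
  have hderiv_eq : deriv (fun z : ℝ => q * z / (1 - (1 - q) ^ ((2:ℝ) ^ z - 1)))
      (-Real.logb 2 (-Real.log (1 - q)) + 3)
      = (q * (1 - p ^ w₀) - q * z₀ * -(p ^ w₀ * Real.log p * ((2:ℝ) ^ z₀ * Real.log 2))) /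
        (1 - p ^ w₀)^2 := by
    have := hddiv.deriv
    rw [← this]
  rw [hderiv_eq]
  -- simplify derivative value
  have hlogp : Real.log p = -u := by simp [hu_def]
  have hDval : p ^ w₀ * Real.log p * ((2:ℝ) ^ z₀ * Real.log 2) = -(8 * Real.log 2 * E) := by
    rw [hpw, hlogp, h2z]; field_simp
  rw [hDval, hpw]
  apply div_pos
  · -- numerator: q*(1-E) - q*z₀*(8 log 2 E) > 0
    have hz₀_le : z₀ ≤ 64 := by
      have hlogu_lb : (-42:ℝ) ≤ Real.log u := by
        rw [← Real.log_exp (-42)]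
        apply Real.log_le_log (Real.exp_pos _)
        have : Real.exp (-42) ≤ 1e-15 := by
          rw [Real.exp_neg, inv_le_comm₀ (Real.exp_pos 42) (by norm_num)]
          have h := Real.exp_one_gt_d9
          have h2 : (2.7:ℝ)^(42:ℕ) ≤ (Real.exp 1)^(42:ℕ) := by
            apply pow_le_pow_left₀ (by norm_num); linarith
          calc (1e-15)⁻¹ = 1e15 := by norm_num
          _ ≤ (2.7:ℝ)^(42:ℕ) := by norm_num
          _ ≤ (Real.exp 1)^(42:ℕ) := h2
          _ = Real.exp 42 := by rw [← Real.exp_nat_mul]; norm_num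
        linarith [huq, hq1]
      have hlog2_lb : (0.6931:ℝ) < Real.log 2 := by
        linarith [Real.log_two_gt_d9]
      have h : Real.logb 2 u ≥ -61 := by
        rw [Real.logb, ge_iff_le, le_div_iff₀ (by linarith : (0:ℝ) < Real.log 2)]
        nlinarith
      simp only [hz_def]; linarith
    have hz₀_pos : 0 < z₀ := by
      have : Real.logb 2 u ≤ 0 := by
        apply Real.logb_nonpos (by norm_num) (le_of_lt hu0) (by linarith)
      simp only [hz_def]; linarith
    have hlog2_ub : Real.log 2 < 0.6932 := by linarith [Real.log_two_lt_d9]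
    have hl2pos : (0:ℝ) < Real.log 2 := Real.log_pos (by norm_num)
    have key : z₀ * (8 * Real.log 2 * E) < 1 - E := by
      have hb : 8 * Real.log 2 * E ≤ 8 * 0.6932 * E := by nlinarith
      have h1 : z₀ * (8 * Real.log 2 * E) ≤ 64 * (8 * 0.6932 * E) :=
        mul_le_mul hz₀_le hb (by positivity) (by norm_num)
      nlinarith
    nlinarith [mul_pos hq0 (sub_pos.2 key)]
  · exact pow_pos hden_pos 2
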